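/- For all natural numbers n, the sum over k from 0 to n of C(2n,k) * C(2n, n+k) * (1 + (n - 2k)*(H_k + H_{n+k})) equals C(2n-1, n). -/

import Mathlib

open Finset

def harmonicQ (m : Nat) : ℚ := ∑ j ∈ Finset.range m, (1 : ℚ) / (j + 1)

lemma harmonicQ_succ (m : ℕ) : harmonicQ (m + 1) = harmonicQ m + 1 / (m + 1) := by
  simp [harmonicQ, Finset.sum_range_succ]

lemma two_mul_choose (m : ℕ) :
    (2 * (m + 1)).choose (m + 1) = 2 * (2 * m + 1).choose (m + 1) := by
  have h1 : 2 * (m + 1) = (2 * m + 1) + 1 := by ring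
  rw [h1, Nat.choose_succ_succ']
  have h2 : (2 * m + 1).choose m = (2 * m + 1).choose (m + 1) := by
    have := Nat.choose_symm (n := 2 * m + 1) (k := m + 1) (by omega)
    have h3 : 2 * m + 1 - (m + 1) = m := by omega
    rw [h3] at this
    exact this
  omega

theorem stmt16 (n : ℕ) :
    ∑ k ∈ range (n + 1), ((2 * n).choose k : ℚ) * ((2 * n).choose (n + k) : ℚ) *
        (1 + ((n : ℚ) - 2 * k) * (harmonicQ k + harmonicQ (n + k)))
      = ((2 * n - 1).choose n : ℚ) := by
  rcases Nat.eq_zero_or_pos n with h0 | hn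
  · subst h0; simp [harmonicQ]
  have hnQ : (n : ℚ) ≠ 0 := Nat.cast_ne_zero.mpr hn.ne'
  set g : ℕ → ℚ := fun k =>
    ((2 * n).choose k : ℚ) * ((2 * n).choose (n + k) : ℚ) *
      ((2 * (n : ℚ) ^ 2 + 3 * n * k - k ^ 2) / (4 * (n : ℚ) ^ 2)
        + (-(k * ((n : ℚ) + k)) / (2 * n)) * (harmonicQ k + harmonicQ (n + k))) with hg
  have key : ∀ k ∈ range (n + 1),
      ((2 * n).choose k : ℚ) * ((2 * n).choose (n + k) : ℚ) *
        (1 + ((n : ℚ) - 2 * k) * (harmonicQ k + harmonicQ (n + k)))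
      = g k - g (k + 1) := by
    intro k hk
    rw [Finset.mem_range] at hk
    have hkn : k ≤ n := by omega
    have hk2 : k ≤ 2 * n := by omega
    have hnk2 : n + k ≤ 2 * n := by omega
    have hA : ((2 * n).choose (k + 1) : ℚ) * (k + 1)
        = ((2 * n).choose k : ℚ) * (2 * (n : ℚ) - k) := by
      have h := Nat.choose_succ_right_eq (2 * n) k
      have h' := congrArg (Nat.cast : ℕ → ℚ) h
      push_cast [Nat.cast_sub hk2] at h'
      convert h' using 2 <;> push_cast <;> ring
    have hB : ((2 * n).choose (n + k + 1) : ℚ) * ((n : ℚ) + k + 1)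
        = ((2 * n).choose (n + k) : ℚ) * ((n : ℚ) - k) := by
      have h := Nat.choose_succ_right_eq (2 * n) (n + k)
      have h' := congrArg (Nat.cast : ℕ → ℚ) h
      have hsub : ((2 * n - (n + k) : ℕ) : ℚ) = (n : ℚ) - k := by
        push_cast [Nat.cast_sub hnk2]; ring
      push_cast [hsub] at h'
      convert h' using 2 <;> push_cast <;> ring
    have hk1 : ((k : ℚ) + 1) ≠ 0 := by positivity
    have hnk1 : ((n : ℚ) + k + 1) ≠ 0 := by positivity
    have eA : ((2 * n).choose (k + 1) : ℚ)
        = ((2 * n).choose k : ℚ) * (2 * (n : ℚ) - k) / ((k : ℚ) + 1) := by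
      rw [eq_div_iff hk1]; exact hA
    have eB : ((2 * n).choose (n + k + 1) : ℚ)
        = ((2 * n).choose (n + k) : ℚ) * ((n : ℚ) - k) / ((n : ℚ) + k + 1) := by
      rw [eq_div_iff hnk1]; exact hB
    have hidx : n + (k + 1) = (n + k) + 1 := by omega
    rw [hg]
    simp only [hidx, eA, eB, harmonicQ_succ]
    push_cast
    field_simp
    ring
  rw [Finset.sum_congr rfl key, Finset.sum_range_sub']
  have hzero : g (n + 1) = 0 := by
    have : (2 * n).choose (n + (n + 1)) = 0 :=
      Nat.choose_eq_zero_of_lt (by omega)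
    simp [hg, this]
  rw [hzero, sub_zero, hg]
  simp only [Nat.choose_self, Nat.add_zero, Nat.cast_zero]
  have hhalf : ((2 * n).choose n : ℚ) = 2 * ((2 * n - 1).choose n : ℚ) := by
    obtain ⟨m, rfl⟩ : ∃ m, n = m + 1 := ⟨n - 1, by omega⟩
    have h1 : 2 * (m + 1) - 1 = 2 * m + 1 := by omega
    rw [h1]
    exact_mod_cast two_mul_choose m
  rw [hhalf]
  simp [harmonicQ]
  field_simp
  ring
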